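/- Let S = {x_1, ..., x_n} be a gcd-closed set of distinct positive integers and let a be a positive integer. Then the n×n matrix (S^a) with (i,j)-entry gcd(x_i, x_j)^a has determinant equal to the product over k = 1, ..., n of α_{a,k}, where α_{a,k} = Σ_{d | x_k, d ∤ x_t for all x_t < x_k in S} (ξ_a * μ)(d), with ξ_a(x) = x^a and * Dirichlet convolution with the Möbius function μ. -/

import Mathlib

open ArithmeticFunction Finset
open scoped ArithmeticFunction.Moebius ArithmeticFunction.zeta

private noncomputable def Fa (a : ℕ) : ArithmeticFunction ℤ :=
  ((pow a : ArithmeticFunction ℕ) : ArithmeticFunction ℤ) * μ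

private lemma Fa_apply (a : ℕ) (ha : 0 < a) (d : ℕ) :
    Fa a d = ∑ e ∈ d.divisors, (e : ℤ) ^ a * (μ (d / e)) := by
  rw [Fa, mul_apply, ← Nat.sum_divisorsAntidiagonal (fun e e' => ((e : ℤ)) ^ a * μ e')]
  refine Finset.sum_congr rfl fun p hp => ?_
  rw [natCoe_apply, pow_apply, if_neg (by omega)]
  push_cast
  ring

private lemma sum_Fa (a : ℕ) (ha : 0 < a) (m : ℕ) :
    ∑ d ∈ m.divisors, Fa a d = if m = 0 then 0 else (m : ℤ) ^ a := by
  have h : (Fa a * (ζ : ArithmeticFunction ℤ)) =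
      ((pow a : ArithmeticFunction ℕ) : ArithmeticFunction ℤ) := by
    rw [Fa, mul_assoc, moebius_mul_coe_zeta, mul_one]
  have h2 := congrArg (fun f : ArithmeticFunction ℤ => f m) h
  simp only [coe_mul_zeta_apply, natCoe_apply, pow_apply] at h2
  rcases eq_or_ne m 0 with rfl | hm
  · simp
  · rw [h2, if_neg (by omega), if_neg hm]
    push_cast; ring

theorem stmt_4 (n : ℕ) (hn : 0 < n) (a : ℕ) (ha : 0 < a)
    (x : Fin n → ℕ) (hinj : Function.Injective x) (hpos : ∀ i, 0 < x i)
    (hgcd : ∀ i j, ∃ k, x k = Nat.gcd (x i) (x j)) :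
    (Matrix.of fun i j : Fin n => ((Nat.gcd (x i) (x j) : ℤ)) ^ a).det =
      ∏ k : Fin n,
        ∑ d ∈ (x k).divisors.filter (fun d => ∀ t, x t < x k → ¬ d ∣ x t),
          ∑ e ∈ d.divisors, (e : ℤ) ^ a * (μ (d / e)) := by
  classical
  set A : Fin n → Finset ℕ :=
    fun k => (x k).divisors.filter (fun d => ∀ t, x t < x k → ¬ d ∣ x t) with hAdef
  set α : Fin n → ℤ := fun k => ∑ d ∈ A k, Fa a d with hαdef
  -- gcd of a nonempty finset is in S
  have hfin : ∀ s : Finset (Fin n), s.Nonempty → ∃ k, x k = s.gcd x := by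
    intro s hs
    induction hs using Finset.Nonempty.cons_induction with
    | singleton i => exact ⟨i, by simp⟩
    | cons i s hi hs ih =>
        obtain ⟨k, hk⟩ := ih
        obtain ⟨k', hk'⟩ := hgcd i k
        exact ⟨k', by rw [Finset.cons_eq_insert, Finset.gcd_insert, hk', hk]; rfl⟩
  -- key: for d ∈ A k, d ∣ x i ↔ x k ∣ x i
  have hA : ∀ k, ∀ d ∈ A k, ∀ i, d ∣ x i ↔ x k ∣ x i := by
    intro k d hd i
    have hdk : d ∣ x k := (Nat.mem_divisors.1 (Finset.mem_filter.1 hd).1).1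
    have hsm : ∀ t, x t < x k → ¬ d ∣ x t := (Finset.mem_filter.1 hd).2
    constructor
    · intro hdi
      obtain ⟨m, hm⟩ := hfin (Finset.univ.filter fun t => d ∣ x t)
        ⟨k, by simp [hdk]⟩
      have hdm : d ∣ x m := by
        rw [hm]; exact Finset.dvd_gcd fun t ht => (Finset.mem_filter.1 ht).2
      have hmk : x m ∣ x k := by
        rw [hm]; exact Finset.gcd_dvd (by simp [hdk])
      have hmi : x m ∣ x i := by
        rw [hm]; exact Finset.gcd_dvd (by simp [hdi])
      have hne : ¬ x m < x k := fun h => hsm m h hdm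
      have : x m = x k := le_antisymm (Nat.le_of_dvd (hpos k) hmk) (not_lt.1 hne)
      exact this ▸ hmi
    · intro h; exact dvd_trans hdk h
  -- uniqueness: the A k are pairwise disjoint
  have hdisj : ∀ k k', k ≠ k' → Disjoint (A k) (A k') := by
    intro k k' hkk'
    rw [Finset.disjoint_left]
    intro d hd hd'
    have h1 : x k ∣ x k' := ((hA k' d hd' k').symm.trans (hA k d hd k')).1 (dvd_refl _)
    have h2 : x k' ∣ x k := ((hA k d hd k).symm.trans (hA k' d hd' k)).1 (dvd_refl _)
    exact hkk' (hinj (Nat.dvd_antisymm h1 h2))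
  -- coverage
  have hcover : ∀ d i, d ∣ x i → ∃ k, d ∈ A k := by
    intro d i hdi
    obtain ⟨m, hm⟩ := hfin (Finset.univ.filter fun t => d ∣ x t) ⟨i, by simp [hdi]⟩
    have hdm : d ∣ x m := by
      rw [hm]; exact Finset.dvd_gcd fun t ht => (Finset.mem_filter.1 ht).2
    refine ⟨m, Finset.mem_filter.2 ⟨Nat.mem_divisors.2 ⟨hdm, (hpos m).ne'⟩, ?_⟩⟩
    intro t ht hdt
    have : x m ∣ x t := by rw [hm]; exact Finset.gcd_dvd (by simp [hdt])
    exact absurd (Nat.le_of_dvd (hpos t) this) (not_le.2 ht)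
  -- the sum identity over divisors of any element of S
  have step : ∀ g, 0 < g → (∃ k0, x k0 = g) →
      ∑ d ∈ g.divisors, Fa a d = ∑ k : Fin n, if x k ∣ g then α k else 0 := by
    intro g hg ⟨k0, hk0⟩
    have hbi : g.divisors = Finset.univ.biUnion (fun k => (A k).filter (· ∣ g)) := by
      ext d
      simp only [Finset.mem_biUnion, Finset.mem_univ, true_and, Finset.mem_filter,
        Nat.mem_divisors]
      constructor
      · rintro ⟨hdg, hg0⟩
        obtain ⟨k, hk⟩ := hcover d k0 (hk0 ▸ hdg)
        exact ⟨k, hk, hdg⟩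
      · rintro ⟨k, hk, hdg⟩
        exact ⟨hdg, hg.ne'⟩
    rw [hbi, Finset.sum_biUnion]
    · refine Finset.sum_congr rfl fun k _ => ?_
      by_cases hkg : x k ∣ g
      · rw [if_pos hkg, Finset.filter_true_of_mem, hαdef]
        intro d hd
        exact hk0 ▸ ((hA k d hd k0).2 (hk0 ▸ hkg))
      · rw [if_neg hkg, Finset.filter_false_of_mem, Finset.sum_empty]
        intro d hd hdg
        exact hkg (hk0 ▸ ((hA k d hd k0).1 (hk0 ▸ hdg)))
    · intro k _ k' _ hkk'
      exact Finset.disjoint_filter_filter (hdisj k k' hkk')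
  -- matrix decomposition
  set E : Matrix (Fin n) (Fin n) ℤ :=
    Matrix.of (fun i k => if x k ∣ x i then (1 : ℤ) else 0) with hEdef
  have hM : (Matrix.of fun i j : Fin n => ((Nat.gcd (x i) (x j) : ℤ)) ^ a)
      = E * Matrix.diagonal α * E.transpose := by
    ext i j
    rw [Matrix.mul_apply]
    simp only [Matrix.mul_diagonal, Matrix.transpose_apply, Matrix.of_apply, hEdef]
    have hg : 0 < Nat.gcd (x i) (x j) := Nat.gcd_pos_of_pos_left _ (hpos i)
    obtain ⟨k0, hk0⟩ := hgcd i j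
    have := step (Nat.gcd (x i) (x j)) hg ⟨k0, hk0⟩
    rw [sum_Fa a ha, if_neg hg.ne'] at this
    rw [this]
    refine Finset.sum_congr rfl fun k _ => ?_
    by_cases h1 : x k ∣ x i <;> by_cases h2 : x k ∣ x j <;>
      simp [h1, h2, Nat.dvd_gcd_iff]
  -- determinant of E is 1
  have hdetE : E.det = 1 := by
    set sg := Tuple.sort x with hsg
    have hmono : StrictMono (x ∘ sg) :=
      (Tuple.monotone_sort x).strictMono_of_injective (hinj.comp sg.injective)
    rw [← Matrix.det_submatrix_equiv_self sg E]
    rw [Matrix.det_of_lowerTriangular]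
    · rw [Finset.prod_congr rfl (fun i _ => ?_), Finset.prod_const_one]
      simp [hEdef, Matrix.submatrix_apply]
    · intro i j hij
      have hij' : (i : Fin n) < j := hij
      have : x (sg i) < x (sg j) := hmono hij'
      have hnd : ¬ x (sg j) ∣ x (sg i) := fun h =>
        absurd (Nat.le_of_dvd (hpos _) h) (not_le.2 this)
      simp [hEdef, Matrix.submatrix_apply, hnd]
  -- conclude
  have hrhs : ∀ k, (∑ d ∈ A k, ∑ e ∈ d.divisors, (e : ℤ) ^ a * (μ (d / e))) = α k := by
    intro k
    exact Finset.sum_congr rfl fun d _ => (Fa_apply a ha d).symm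
  calc (Matrix.of fun i j : Fin n => ((Nat.gcd (x i) (x j) : ℤ)) ^ a).det
      = (E * Matrix.diagonal α * E.transpose).det := by rw [hM]
    _ = E.det * (Matrix.diagonal α).det * E.transpose.det := by
        rw [Matrix.det_mul, Matrix.det_mul]
    _ = ∏ k, α k := by
        rw [hdetE, Matrix.det_transpose, hdetE, Matrix.det_diagonal]; ring
    _ = _ := by
        exact (Finset.prod_congr rfl fun k _ => (hrhs k).symm)
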